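/- Shift relation for the shift (A₀,A₁,A₂,A₃) → (A₀+1,A₁+1,A₂,A₃) of the equation Z₃: let P = x(x−1)∂² + (−(A₀+A₁−2A₂−2)x + A₀−A₂−1)∂ + (A₀²+A₁²+A₂²−A₃²+1)/2 + A₀A₁ − A₂(A₀+A₁−1), and let Q = x(x−1)∂² + (−(A₀+A₁−2A₂−2)x + A₀−A₂−1 − (2x−1))∂ + (A₀²+A₁²+A₂²−A₃²+1)/2 + A₀A₁ − A₂(A₀+A₁−1) − (2A₂−A₀−A₁). Then for every function u holomorphic on an open set U ⊆ ℂ∖{0,1} and every x ∈ U, (Z₃(A₀+1,A₁+1,A₂,A₃)(P u))(x) = (Q (Z₃(A₀,A₁,A₂,A₃) u))(x). -/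
import Mathlib

/-!
STATEMENT 7: Shift relation for the shift (A₀,A₁,A₂,A₃) → (A₀+1,A₁+1,A₂,A₃)
of the equation Z₃: Z₃(A₀+1,A₁+1,A₂,A₃) ∘ P = Q ∘ Z₃(A₀,A₁,A₂,A₃).
-/

/-- The operator Z₃(A₀,A₁,A₂,A₃) acting on a function u. -/
noncomputable def Z3op (A0 A1 A2 A3 : ℂ) (u : ℂ → ℂ) : ℂ → ℂ := fun x =>
  x^2*(x - 1)^2 * iteratedDeriv 3 u x
  + x*(2*x - 1)*(x - 1)*(3 + 2*A2) * iteratedDeriv 2 u x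
  + ((5*A2^2 - A3^2 + 12*A2 + 7)*x^2 + (A0^2 - A1^2 - 5*A2^2 + A3^2 - 12*A2 - 7)*x
      - (A0 + 1 + A2)*(A0 - 1 - A2)) * deriv u x
  + ((2*A2 + 1)*(-A3 + A2 + 1)*(A3 + A2 + 1)*x
      + (2*A2 + 1)*(A0^2 - A1^2 - A2^2 + A3^2 - 2*A2 - 1)/2) * u x

/-- The shift operator P for (1,1,0,0) acting on a function u. -/
noncomputable def P1100 (A0 A1 A2 A3 : ℂ) (u : ℂ → ℂ) : ℂ → ℂ := fun x =>
  x*(x - 1) * iteratedDeriv 2 u x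
  + (-(A0 + A1 - 2*A2 - 2)*x + A0 - A2 - 1) * deriv u x
  + ((A0^2 + A1^2 + A2^2 - A3^2 + 1)/2 + A0*A1 - A2*(A0 + A1 - 1)) * u x

/-- The shift operator Q for (1,1,0,0) acting on a function u. -/
noncomputable def Q1100 (A0 A1 A2 A3 : ℂ) (u : ℂ → ℂ) : ℂ → ℂ := fun x =>
  x*(x - 1) * iteratedDeriv 2 u x
  + (-(A0 + A1 - 2*A2 - 2)*x + A0 - A2 - 1 - (2*x - 1)) * deriv u x
  + ((A0^2 + A1^2 + A2^2 - A3^2 + 1)/2 + A0*A1 - A2*(A0 + A1 - 1)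
      - (2*A2 - A0 - A1)) * u x

private lemma hquartic (a b c d e y : ℂ) :
    HasDerivAt (fun x : ℂ => a*x^4 + b*x^3 + c*x^2 + d*x + e)
      (4*a*y^3 + 3*b*y^2 + 2*c*y + d) y := by
  have h := (((((hasDerivAt_pow 4 y).const_mul a).add
      ((hasDerivAt_pow 3 y).const_mul b)).add
      ((hasDerivAt_pow 2 y).const_mul c)).add
      ((hasDerivAt_id y).const_mul d)).add_const e
  exact h.congr_deriv (by push_cast; ring)

noncomputable def Znf0 (A0 A1 A2 A3 : ℂ) (u : ℂ → ℂ) : ℂ → ℂ := fun y =>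
    (((1))*y^4 + ((-2))*y^3 + ((1))*y^2 + (0)*y + (0)) * iteratedDeriv 3 u y +
    ((0)*y^4 + ((4)*A2 + (6))*y^3 + ((-6)*A2 + (-9))*y^2 + ((2)*A2 + (3))*y + (0)) * iteratedDeriv 2 u y +
    ((0)*y^4 + (0)*y^3 + ((5)*A2^2 + (12)*A2 + (-1)*A3^2 + (7))*y^2 + (A0^2 + (-1)*A1^2 + (-5)*A2^2 + (-12)*A2 + A3^2 + (-7))*y + ((-1)*A0^2 + A2^2 + (2)*A2 + (1))) * iteratedDeriv 1 u y +
    ((0)*y^4 + (0)*y^3 + (0)*y^2 + ((2)*A2^3 + (5)*A2^2 + (-2)*A2*A3^2 + (4)*A2 + (-1)*A3^2 + (1))*y + (A0^2*A2 + (1/2)*A0^2 + (-1)*A1^2*A2 + (-1/2)*A1^2 + (-1)*A2^3 + (-5/2)*A2^2 + A2*A3^2 + (-2)*A2 + (1/2)*A3^2 + (-1/2))) * iteratedDeriv 0 u y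

noncomputable def Znf1 (A0 A1 A2 A3 : ℂ) (u : ℂ → ℂ) : ℂ → ℂ := fun y =>
    (((1))*y^4 + ((-2))*y^3 + ((1))*y^2 + (0)*y + (0)) * iteratedDeriv 4 u y +
    ((0)*y^4 + ((4)*A2 + (10))*y^3 + ((-6)*A2 + (-15))*y^2 + ((2)*A2 + (5))*y + (0)) * iteratedDeriv 3 u y +
    ((0)*y^4 + (0)*y^3 + ((5)*A2^2 + (24)*A2 + (-1)*A3^2 + (25))*y^2 + (A0^2 + (-1)*A1^2 + (-5)*A2^2 + (-24)*A2 + A3^2 + (-25))*y + ((-1)*A0^2 + A2^2 + (4)*A2 + (4))) * iteratedDeriv 2 u y +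
    ((0)*y^4 + (0)*y^3 + (0)*y^2 + ((2)*A2^3 + (15)*A2^2 + (-2)*A2*A3^2 + (28)*A2 + (-3)*A3^2 + (15))*y + (A0^2*A2 + (3/2)*A0^2 + (-1)*A1^2*A2 + (-3/2)*A1^2 + (-1)*A2^3 + (-15/2)*A2^2 + A2*A3^2 + (-14)*A2 + (3/2)*A3^2 + (-15/2))) * iteratedDeriv 1 u y +
    ((0)*y^4 + (0)*y^3 + (0)*y^2 + (0)*y + ((2)*A2^3 + (5)*A2^2 + (-2)*A2*A3^2 + (4)*A2 + (-1)*A3^2 + (1))) * iteratedDeriv 0 u y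

noncomputable def Znf2 (A0 A1 A2 A3 : ℂ) (u : ℂ → ℂ) : ℂ → ℂ := fun y =>
    (((1))*y^4 + ((-2))*y^3 + ((1))*y^2 + (0)*y + (0)) * iteratedDeriv 5 u y +
    ((0)*y^4 + ((4)*A2 + (14))*y^3 + ((-6)*A2 + (-21))*y^2 + ((2)*A2 + (7))*y + (0)) * iteratedDeriv 4 u y +
    ((0)*y^4 + (0)*y^3 + ((5)*A2^2 + (36)*A2 + (-1)*A3^2 + (55))*y^2 + (A0^2 + (-1)*A1^2 + (-5)*A2^2 + (-36)*A2 + A3^2 + (-55))*y + ((-1)*A0^2 + A2^2 + (6)*A2 + (9))) * iteratedDeriv 3 u y +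
    ((0)*y^4 + (0)*y^3 + (0)*y^2 + ((2)*A2^3 + (25)*A2^2 + (-2)*A2*A3^2 + (76)*A2 + (-5)*A3^2 + (65))*y + (A0^2*A2 + (5/2)*A0^2 + (-1)*A1^2*A2 + (-5/2)*A1^2 + (-1)*A2^3 + (-25/2)*A2^2 + A2*A3^2 + (-38)*A2 + (5/2)*A3^2 + (-65/2))) * iteratedDeriv 2 u y +
    ((0)*y^4 + (0)*y^3 + (0)*y^2 + (0)*y + ((4)*A2^3 + (20)*A2^2 + (-4)*A2*A3^2 + (32)*A2 + (-4)*A3^2 + (16))) * iteratedDeriv 1 u y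

noncomputable def Pnf0 (A0 A1 A2 A3 : ℂ) (u : ℂ → ℂ) : ℂ → ℂ := fun y =>
    ((0)*y^4 + (0)*y^3 + ((1))*y^2 + ((-1))*y + (0)) * iteratedDeriv 2 u y +
    ((0)*y^4 + (0)*y^3 + (0)*y^2 + ((-1)*A0 + (-1)*A1 + (2)*A2 + (2))*y + (A0 + (-1)*A2 + (-1))) * iteratedDeriv 1 u y +
    ((0)*y^4 + (0)*y^3 + (0)*y^2 + (0)*y + ((1/2)*A0^2 + A0*A1 + (-1)*A0*A2 + (1/2)*A1^2 + (-1)*A1*A2 + (1/2)*A2^2 + A2 + (-1/2)*A3^2 + (1/2))) * iteratedDeriv 0 u y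

noncomputable def Pnf1 (A0 A1 A2 A3 : ℂ) (u : ℂ → ℂ) : ℂ → ℂ := fun y =>
    ((0)*y^4 + (0)*y^3 + ((1))*y^2 + ((-1))*y + (0)) * iteratedDeriv 3 u y +
    ((0)*y^4 + (0)*y^3 + (0)*y^2 + ((-1)*A0 + (-1)*A1 + (2)*A2 + (4))*y + (A0 + (-1)*A2 + (-2))) * iteratedDeriv 2 u y +
    ((0)*y^4 + (0)*y^3 + (0)*y^2 + (0)*y + ((1/2)*A0^2 + A0*A1 + (-1)*A0*A2 + (-1)*A0 + (1/2)*A1^2 + (-1)*A1*A2 + (-1)*A1 + (1/2)*A2^2 + (3)*A2 + (-1/2)*A3^2 + (5/2))) * iteratedDeriv 1 u y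

noncomputable def Pnf2 (A0 A1 A2 A3 : ℂ) (u : ℂ → ℂ) : ℂ → ℂ := fun y =>
    ((0)*y^4 + (0)*y^3 + ((1))*y^2 + ((-1))*y + (0)) * iteratedDeriv 4 u y +
    ((0)*y^4 + (0)*y^3 + (0)*y^2 + ((-1)*A0 + (-1)*A1 + (2)*A2 + (6))*y + (A0 + (-1)*A2 + (-3))) * iteratedDeriv 3 u y +
    ((0)*y^4 + (0)*y^3 + (0)*y^2 + (0)*y + ((1/2)*A0^2 + A0*A1 + (-1)*A0*A2 + (-2)*A0 + (1/2)*A1^2 + (-1)*A1*A2 + (-2)*A1 + (1/2)*A2^2 + (5)*A2 + (-1/2)*A3^2 + (13/2))) * iteratedDeriv 2 u y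

noncomputable def Pnf3 (A0 A1 A2 A3 : ℂ) (u : ℂ → ℂ) : ℂ → ℂ := fun y =>
    ((0)*y^4 + (0)*y^3 + ((1))*y^2 + ((-1))*y + (0)) * iteratedDeriv 5 u y +
    ((0)*y^4 + (0)*y^3 + (0)*y^2 + ((-1)*A0 + (-1)*A1 + (2)*A2 + (8))*y + (A0 + (-1)*A2 + (-4))) * iteratedDeriv 4 u y +
    ((0)*y^4 + (0)*y^3 + (0)*y^2 + (0)*y + ((1/2)*A0^2 + A0*A1 + (-1)*A0*A2 + (-3)*A0 + (1/2)*A1^2 + (-1)*A1*A2 + (-3)*A1 + (1/2)*A2^2 + (7)*A2 + (-1/2)*A3^2 + (25/2))) * iteratedDeriv 3 u y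

theorem Z3_shift_1100 (A0 A1 A2 A3 : ℂ) (U : Set ℂ) (hU : IsOpen U)
    (hU0 : (0 : ℂ) ∉ U) (hU1 : (1 : ℂ) ∉ U)
    (u : ℂ → ℂ) (hu : DifferentiableOn ℂ u U) (x : ℂ) (hx : x ∈ U) :
    Z3op (A0 + 1) (A1 + 1) A2 A3 (P1100 A0 A1 A2 A3 u) x
      = Q1100 A0 A1 A2 A3 (Z3op A0 A1 A2 A3 u) x := by
  have han : AnalyticOnNhd ℂ u U := hu.analyticOnNhd hU
  have hD : ∀ (n : ℕ), ∀ y ∈ U, HasDerivAt (iteratedDeriv n u) (iteratedDeriv (n+1) u y) y := by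
    intro n y hy
    have h1 : AnalyticOnNhd ℂ (iteratedDeriv n u) U := by
      rw [iteratedDeriv_eq_iterate]; exact han.iterated_deriv n
    have h2 := ((h1 y hy).differentiableAt).hasDerivAt
    rwa [← iteratedDeriv_succ] at h2
  have EP1 : ∀ y ∈ U, deriv (Pnf0 A0 A1 A2 A3 u) y = Pnf1 A0 A1 A2 A3 u y := by
    intro y hy
    have d2 : HasDerivAt (iteratedDeriv 2 u) (iteratedDeriv 3 u y) y := hD 2 y hy
    have d1 : HasDerivAt (iteratedDeriv 1 u) (iteratedDeriv 2 u y) y := hD 1 y hy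
    have d0 : HasDerivAt (iteratedDeriv 0 u) (iteratedDeriv 1 u y) y := hD 0 y hy
    have H := ((((hquartic (0) (0) ((1)) ((-1)) (0) y).mul (d2 )).add ((hquartic (0) (0) (0) ((-1)*A0 + (-1)*A1 + (2)*A2 + (2)) (A0 + (-1)*A2 + (-1)) y).mul (d1 ))).add ((hquartic (0) (0) (0) (0) ((1/2)*A0^2 + A0*A1 + (-1)*A0*A2 + (1/2)*A1^2 + (-1)*A1*A2 + (1/2)*A2^2 + A2 + (-1/2)*A3^2 + (1/2)) y).mul (d0 )))
    refine H.deriv.trans ?_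
    simp only [Pnf1]
    ring

  have EP2 : ∀ y ∈ U, deriv (Pnf1 A0 A1 A2 A3 u) y = Pnf2 A0 A1 A2 A3 u y := by
    intro y hy
    have d3 : HasDerivAt (iteratedDeriv 3 u) (iteratedDeriv 4 u y) y := hD 3 y hy
    have d2 : HasDerivAt (iteratedDeriv 2 u) (iteratedDeriv 3 u y) y := hD 2 y hy
    have d1 : HasDerivAt (iteratedDeriv 1 u) (iteratedDeriv 2 u y) y := hD 1 y hy
    have H := ((((hquartic (0) (0) ((1)) ((-1)) (0) y).mul (d3 )).add ((hquartic (0) (0) (0) ((-1)*A0 + (-1)*A1 + (2)*A2 + (4)) (A0 + (-1)*A2 + (-2)) y).mul (d2 ))).add ((hquartic (0) (0) (0) (0) ((1/2)*A0^2 + A0*A1 + (-1)*A0*A2 + (-1)*A0 + (1/2)*A1^2 + (-1)*A1*A2 + (-1)*A1 + (1/2)*A2^2 + (3)*A2 + (-1/2)*A3^2 + (5/2)) y).mul (d1 )))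
    refine H.deriv.trans ?_
    simp only [Pnf2]
    ring

  have EP3 : ∀ y ∈ U, deriv (Pnf2 A0 A1 A2 A3 u) y = Pnf3 A0 A1 A2 A3 u y := by
    intro y hy
    have d4 : HasDerivAt (iteratedDeriv 4 u) (iteratedDeriv 5 u y) y := hD 4 y hy
    have d3 : HasDerivAt (iteratedDeriv 3 u) (iteratedDeriv 4 u y) y := hD 3 y hy
    have d2 : HasDerivAt (iteratedDeriv 2 u) (iteratedDeriv 3 u y) y := hD 2 y hy
    have H := ((((hquartic (0) (0) ((1)) ((-1)) (0) y).mul (d4 )).add ((hquartic (0) (0) (0) ((-1)*A0 + (-1)*A1 + (2)*A2 + (6)) (A0 + (-1)*A2 + (-3)) y).mul (d3 ))).add ((hquartic (0) (0) (0) (0) ((1/2)*A0^2 + A0*A1 + (-1)*A0*A2 + (-2)*A0 + (1/2)*A1^2 + (-1)*A1*A2 + (-2)*A1 + (1/2)*A2^2 + (5)*A2 + (-1/2)*A3^2 + (13/2)) y).mul (d2 )))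
    refine H.deriv.trans ?_
    simp only [Pnf3]
    ring

  have EZ1 : ∀ y ∈ U, deriv (Znf0 A0 A1 A2 A3 u) y = Znf1 A0 A1 A2 A3 u y := by
    intro y hy
    have d3 : HasDerivAt (iteratedDeriv 3 u) (iteratedDeriv 4 u y) y := hD 3 y hy
    have d2 : HasDerivAt (iteratedDeriv 2 u) (iteratedDeriv 3 u y) y := hD 2 y hy
    have d1 : HasDerivAt (iteratedDeriv 1 u) (iteratedDeriv 2 u y) y := hD 1 y hy
    have d0 : HasDerivAt (iteratedDeriv 0 u) (iteratedDeriv 1 u y) y := hD 0 y hy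
    have H := (((((hquartic ((1)) ((-2)) ((1)) (0) (0) y).mul (d3 )).add ((hquartic (0) ((4)*A2 + (6)) ((-6)*A2 + (-9)) ((2)*A2 + (3)) (0) y).mul (d2 ))).add ((hquartic (0) (0) ((5)*A2^2 + (12)*A2 + (-1)*A3^2 + (7)) (A0^2 + (-1)*A1^2 + (-5)*A2^2 + (-12)*A2 + A3^2 + (-7)) ((-1)*A0^2 + A2^2 + (2)*A2 + (1)) y).mul (d1 ))).add ((hquartic (0) (0) (0) ((2)*A2^3 + (5)*A2^2 + (-2)*A2*A3^2 + (4)*A2 + (-1)*A3^2 + (1)) (A0^2*A2 + (1/2)*A0^2 + (-1)*A1^2*A2 + (-1/2)*A1^2 + (-1)*A2^3 + (-5/2)*A2^2 + A2*A3^2 + (-2)*A2 + (1/2)*A3^2 + (-1/2)) y).mul (d0 )))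
    refine H.deriv.trans ?_
    simp only [Znf1]
    ring

  have EZ2 : ∀ y ∈ U, deriv (Znf1 A0 A1 A2 A3 u) y = Znf2 A0 A1 A2 A3 u y := by
    intro y hy
    have d4 : HasDerivAt (iteratedDeriv 4 u) (iteratedDeriv 5 u y) y := hD 4 y hy
    have d3 : HasDerivAt (iteratedDeriv 3 u) (iteratedDeriv 4 u y) y := hD 3 y hy
    have d2 : HasDerivAt (iteratedDeriv 2 u) (iteratedDeriv 3 u y) y := hD 2 y hy
    have d1 : HasDerivAt (iteratedDeriv 1 u) (iteratedDeriv 2 u y) y := hD 1 y hy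
    have d0 : HasDerivAt (iteratedDeriv 0 u) (iteratedDeriv 1 u y) y := hD 0 y hy
    have H := ((((((hquartic ((1)) ((-2)) ((1)) (0) (0) y).mul (d4 )).add ((hquartic (0) ((4)*A2 + (10)) ((-6)*A2 + (-15)) ((2)*A2 + (5)) (0) y).mul (d3 ))).add ((hquartic (0) (0) ((5)*A2^2 + (24)*A2 + (-1)*A3^2 + (25)) (A0^2 + (-1)*A1^2 + (-5)*A2^2 + (-24)*A2 + A3^2 + (-25)) ((-1)*A0^2 + A2^2 + (4)*A2 + (4)) y).mul (d2 ))).add ((hquartic (0) (0) (0) ((2)*A2^3 + (15)*A2^2 + (-2)*A2*A3^2 + (28)*A2 + (-3)*A3^2 + (15)) (A0^2*A2 + (3/2)*A0^2 + (-1)*A1^2*A2 + (-3/2)*A1^2 + (-1)*A2^3 + (-15/2)*A2^2 + A2*A3^2 + (-14)*A2 + (3/2)*A3^2 + (-15/2)) y).mul (d1 ))).add ((hquartic (0) (0) (0) (0) ((2)*A2^3 + (5)*A2^2 + (-2)*A2*A3^2 + (4)*A2 + (-1)*A3^2 + (1)) y).mul (d0 )))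
    refine H.deriv.trans ?_
    simp only [Znf2]
    ring
  have hPfun : P1100 A0 A1 A2 A3 u = Pnf0 A0 A1 A2 A3 u := by
    funext z
    simp only [P1100, Pnf0, iteratedDeriv_one, iteratedDeriv_zero]
    ring
  have hZfun : Z3op A0 A1 A2 A3 u = Znf0 A0 A1 A2 A3 u := by
    funext z
    simp only [Z3op, Znf0, iteratedDeriv_one, iteratedDeriv_zero]
    ring
  have FP2 : ∀ y ∈ U, deriv (deriv (Pnf0 A0 A1 A2 A3 u)) y = Pnf2 A0 A1 A2 A3 u y := by
    intro y hy
    have h : deriv (Pnf0 A0 A1 A2 A3 u) =ᶠ[nhds y] Pnf1 A0 A1 A2 A3 u :=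
      Filter.eventuallyEq_of_mem (hU.mem_nhds hy) (fun z hz => EP1 z hz)
    rw [h.deriv_eq]; exact EP2 y hy
  have FP3 : ∀ y ∈ U, deriv (deriv (deriv (Pnf0 A0 A1 A2 A3 u))) y = Pnf3 A0 A1 A2 A3 u y := by
    intro y hy
    have h : deriv (deriv (Pnf0 A0 A1 A2 A3 u)) =ᶠ[nhds y] Pnf2 A0 A1 A2 A3 u :=
      Filter.eventuallyEq_of_mem (hU.mem_nhds hy) (fun z hz => FP2 z hz)
    rw [h.deriv_eq]; exact EP3 y hy
  have FZ2 : deriv (deriv (Znf0 A0 A1 A2 A3 u)) x = Znf2 A0 A1 A2 A3 u x := by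
    have h : deriv (Znf0 A0 A1 A2 A3 u) =ᶠ[nhds x] Znf1 A0 A1 A2 A3 u :=
      Filter.eventuallyEq_of_mem (hU.mem_nhds hx) (fun z hz => EZ1 z hz)
    rw [h.deriv_eq]; exact EZ2 x hx
  have i2 : ∀ f : ℂ → ℂ, iteratedDeriv 2 f = deriv (deriv f) := by
    intro f
    rw [show (2:ℕ) = 1+1 from rfl, iteratedDeriv_succ, iteratedDeriv_one]
  have i3 : ∀ f : ℂ → ℂ, iteratedDeriv 3 f = deriv (deriv (deriv f)) := by
    intro f
    rw [show (3:ℕ) = 2+1 from rfl, iteratedDeriv_succ, i2]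
  simp only [Z3op, Q1100]
  rw [hPfun, hZfun, i3 (Pnf0 A0 A1 A2 A3 u), i2 (Pnf0 A0 A1 A2 A3 u),
    i2 (Znf0 A0 A1 A2 A3 u), FP3 x hx, FP2 x hx, EP1 x hx, FZ2, EZ1 x hx]
  simp only [Pnf0, Pnf1, Pnf2, Pnf3, Znf0, Znf1, Znf2, iteratedDeriv_one, iteratedDeriv_zero]
  ring
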